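/- arXiv:2112.05020 — 4 statements merged into one kernel-verified Lean document; each statement's English description precedes it below -/
import Mathlib

section
/- Let $A_1 \in \mathbb{R}^{n\times n}$ be symmetric positive definite, $A_2 \in \mathbb{R}^{m\times m}$ symmetric positive semi-definite, $B \in \mathbb{R}^{m\times n}$, and suppose $S_1 = A_2 + B A_1^{-1} B^T$ is positive definite. Then every eigenvalue $\mu$ of the generalized eigenproblem $\begin{pmatrix} A_1 & B^T \\ B & -A_2 \end{pmatrix} x = \mu \begin{pmatrix} A_1 & 0 \\ 0 & S_1 \end{pmatrix} x$ satisfies $\mu \in [-1, \tfrac{1}{2}(1-\sqrt{5})] \cup [1, \tfrac{1}{2}(1+\sqrt{5})]$. -/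
open Matrix

set_option maxHeartbeats 1000000 in
theorem stmt0 {n m : ℕ}
    (A1 : Matrix (Fin n) (Fin n) ℝ) (A2 : Matrix (Fin m) (Fin m) ℝ)
    (B : Matrix (Fin m) (Fin n) ℝ)
    (hA1 : A1.PosDef) (hA2 : A2.PosSemidef)
    (hS1 : (A2 + B * A1⁻¹ * Bᵀ).PosDef)
    (μ : ℝ) (x : Fin n ⊕ Fin m → ℝ) (hx : x ≠ 0)
    (heig : (Matrix.fromBlocks A1 Bᵀ B (-A2)).mulVec x
      = μ • (Matrix.fromBlocks A1 0 0 (A2 + B * A1⁻¹ * Bᵀ)).mulVec x) :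
    μ ∈ Set.Icc (-1 : ℝ) ((1 - Real.sqrt 5)/2) ∪ Set.Icc (1 : ℝ) ((1 + Real.sqrt 5)/2) := by
  by_contra hμ
  simp only [Set.mem_union, Set.mem_Icc, not_or, not_and_or, not_le] at hμ
  set s := Real.sqrt 5 with hsdef
  have hs0 : 0 ≤ s := Real.sqrt_nonneg 5
  have hs5 : s ^ 2 = 5 := Real.sq_sqrt (by norm_num)
  have hs1 : 1 < s := by nlinarith
  set u : Fin n → ℝ := x ∘ Sum.inl with hu
  set v : Fin m → ℝ := x ∘ Sum.inr with hv
  have hx' : x = Sum.elim u v := by funext i; cases i <;> rfl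
  rw [hx'] at heig
  have e1 : A1 *ᵥ u + Bᵀ *ᵥ v = μ • (A1 *ᵥ u) := by
    funext i
    have := congrFun heig (Sum.inl i)
    simpa [Matrix.fromBlocks_mulVec] using this
  have e2 : B *ᵥ u - A2 *ᵥ v = μ • ((A2 + B * A1⁻¹ * Bᵀ) *ᵥ v) := by
    funext j
    have := congrFun heig (Sum.inr j)
    simpa [Matrix.fromBlocks_mulVec, Matrix.neg_mulVec, sub_eq_add_neg] using this
  have e1' : Bᵀ *ᵥ v = (μ - 1) • (A1 *ᵥ u) := by
    have : Bᵀ *ᵥ v = μ • (A1 *ᵥ u) - A1 *ᵥ u := by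
      rw [← e1]; abel
    rw [this, sub_smul, one_smul]
  have hdet : IsUnit A1.det := isUnit_iff_ne_zero.mpr (ne_of_gt hA1.det_pos)
  have eInv : A1⁻¹ *ᵥ (Bᵀ *ᵥ v) = (μ - 1) • u := by
    rw [e1', Matrix.mulVec_smul, Matrix.mulVec_mulVec, Matrix.nonsing_inv_mul A1 hdet,
      Matrix.one_mulVec]
  have eT : (B * A1⁻¹ * Bᵀ) *ᵥ v = (μ - 1) • (B *ᵥ u) := by
    rw [← Matrix.mulVec_mulVec, ← Matrix.mulVec_mulVec, eInv, Matrix.mulVec_smul]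
  -- scalar quantities
  set p : ℝ := u ⬝ᵥ (A1 *ᵥ u) with hp
  set b : ℝ := v ⬝ᵥ (B *ᵥ u) with hb
  set a : ℝ := v ⬝ᵥ (A2 *ᵥ v) with ha
  set t : ℝ := v ⬝ᵥ ((B * A1⁻¹ * Bᵀ) *ᵥ v) with ht
  have hub : u ⬝ᵥ (Bᵀ *ᵥ v) = b := by
    rw [Matrix.dotProduct_mulVec, Matrix.vecMul_transpose, dotProduct_comm]
  have hbp : b = (μ - 1) * p := by
    have := congrArg (fun w => u ⬝ᵥ w) e1'
    simpa [hub, dotProduct_smul, smul_eq_mul] using this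
  have htb : t = (μ - 1) * b := by
    have := congrArg (fun w => v ⬝ᵥ w) eT
    simpa [ht, hb, dotProduct_smul, smul_eq_mul] using this
  have he2 : b - a = μ * a + μ * t := by
    have := congrArg (fun w => v ⬝ᵥ w) e2
    simpa [dotProduct_sub, Matrix.add_mulVec, dotProduct_add, dotProduct_smul,
      smul_eq_mul, mul_add] using this
  have hp0 : 0 ≤ p := by
    have := hA1.posSemidef.dotProduct_mulVec_nonneg u
    simpa using this
  have ha0 : 0 ≤ a := by
    have := hA2.dotProduct_mulVec_nonneg v
    simpa using this
  have ht0 : 0 ≤ t := by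
    rw [htb, hbp]
    nlinarith [sq_nonneg (μ - 1)]
  have hvne : v ≠ 0 := by
    intro hv0
    have hune : u ≠ 0 := by
      intro hu0
      apply hx
      rw [hx', hu0, hv0]
      funext i; cases i <;> rfl
    have hppos : 0 < p := by
      have := hA1.dotProduct_mulVec_pos hune
      simpa [hp] using this
    have hBv : (μ - 1) • (A1 *ᵥ u) = 0 := by
      rw [← e1', hv0, Matrix.mulVec_zero]
    have hμ1 : (μ - 1) * p = 0 := by
      have := congrArg (fun w => u ⬝ᵥ w) hBv
      simpa [dotProduct_smul, smul_eq_mul, hp] using this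
    have hμeq : μ = 1 := by
      rcases mul_eq_zero.mp hμ1 with h | h
      · linarith
      · exact absurd h (ne_of_gt hppos)
    subst hμeq
    rcases hμ.2 with h | h
    · linarith
    · nlinarith
  have hat : 0 < a + t := by
    have := hS1.dotProduct_mulVec_pos hvne
    simpa [Matrix.add_mulVec, dotProduct_add, ha, ht] using this
  have key : (1 + μ - μ ^ 2) * t = (μ ^ 2 - 1) * a := by
    linear_combination htb + (μ - 1) * he2
  have contra : ∀ L R : ℝ, 0 < L → R < 0 → L * t = R * a → False := by
    intro L R hL hR hk
    have h1 : R * a ≤ 0 := mul_nonpos_of_nonpos_of_nonneg hR.le ha0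
    have h2 : 0 ≤ L * t := mul_nonneg hL.le ht0
    have htz : t = 0 := by
      have hz : L * t = 0 := le_antisymm (hk ▸ h1) h2
      exact (mul_eq_zero.mp hz).resolve_left (ne_of_gt hL)
    have haz : a = 0 := by
      have hz : R * a = 0 := by rw [← hk, htz, mul_zero]
      exact (mul_eq_zero.mp hz).resolve_left (ne_of_lt hR)
    linarith
  have key' : (μ ^ 2 - μ - 1) * t = (1 - μ ^ 2) * a := by linear_combination -key
  have hs3 : s < 3 := by nlinarith
  obtain ⟨h1, h2⟩ := hμ
  rcases h1 with h1 | h1 <;> rcases h2 with h2 | h2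
  · -- μ < -1, μ < 1
    refine contra _ _ ?_ ?_ key'
    · have hfac : (1:ℝ) * 2 ≤ (-μ) * (1 - μ) :=
        mul_le_mul (by linarith) (by linarith) (by norm_num) (by linarith)
      have hid : (-μ) * (1 - μ) = μ ^ 2 - μ := by ring
      linarith [hid ▸ hfac]
    · have hfac : 0 < (μ - 1) * (μ + 1) := mul_pos_of_neg_of_neg (by linarith) (by linarith)
      have hid : (μ - 1) * (μ + 1) = μ ^ 2 - 1 := by ring
      linarith [hid ▸ hfac]
  · -- μ < -1, (1+s)/2 < μ : impossible
    linarith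
  · -- (1-s)/2 < μ, μ < 1
    refine contra _ _ ?_ ?_ key
    · have hfac : 0 < (μ - (1 - s)/2) * ((1 + s)/2 - μ) :=
        mul_pos (by linarith) (by linarith)
      have hid : (μ - (1 - s)/2) * ((1 + s)/2 - μ) = 1 + μ - μ ^ 2 := by
        linear_combination (1/4) * hs5
      linarith [hid ▸ hfac]
    · have hfac : 0 < (1 - μ) * (1 + μ) := mul_pos (by linarith) (by linarith)
      have hid : (1 - μ) * (1 + μ) = 1 - μ ^ 2 := by ring
      linarith [hid ▸ hfac]
  · -- (1-s)/2 < μ, (1+s)/2 < μ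
    refine contra _ _ ?_ ?_ key'
    · have hfac : 0 < (μ - (1 - s)/2) * (μ - (1 + s)/2) :=
        mul_pos (by linarith) (by linarith)
      have hid : (μ - (1 - s)/2) * (μ - (1 + s)/2) = μ ^ 2 - μ - 1 := by
        linear_combination (-1/4) * hs5
      linarith [hid ▸ hfac]
    · have hfac : 0 < (μ - 1) * (μ + 1) := mul_pos (by linarith) (by linarith)
      have hid : (μ - 1) * (μ + 1) = μ ^ 2 - 1 := by ring
      linarith [hid ▸ hfac]
end

section
/- Let $A_1$, $A_2$, $B_1$, $B_2$ be real matrices with $A_1$ symmetric positive definite, $A_2$ symmetric positive semi-definite, $S_1 = A_2 + B_1 A_1^{-1} B_1^T$ positive definite, and $S_2 = B_2 S_1^{-1} B_2^T$ positive definite. Then every eigenvalue $\mu$ of $\mathcal{P}_D^{-1} \mathcal{A}_0$, where $\mathcal{A}_0 = \begin{pmatrix} A_1 & B_1^T & 0 \\ B_1 & -A_2 & B_2^T \\ 0 & B_2 & 0 \end{pmatrix}$ and $\mathcal{P}_D = \mathrm{diag}(A_1, S_1, S_2)$, satisfies $\mu \in [-\tfrac{1}{2}(1+\sqrt{5}),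 2\cos(5\pi/7)] \cup [-1, \tfrac{1}{2}(1-\sqrt{5})] \cup [2\cos(3\pi/7), \tfrac{1}{2}(\sqrt{5}-1)] \cup [1, 2\cos(\pi/7)]$. -/
open Matrix

open Real

-- generic: if cos(4θ) = -cos(3θ) and cos θ ≠ -1 then r = 2cosθ satisfies cubic
lemma cubic_of_cos (θ : ℝ) (h : Real.cos (4*θ) = - Real.cos (3*θ)) (h1 : Real.cos θ ≠ -1) :
    (2*Real.cos θ)^3 - (2*Real.cos θ)^2 - 2*(2*Real.cos θ) + 1 = 0 := by
  have h4 : Real.cos (4*θ) = 2 * (2 * Real.cos θ ^ 2 - 1)^2 - 1 := by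
    rw [show (4:ℝ)*θ = 2*(2*θ) by ring, Real.cos_two_mul, Real.cos_two_mul]
  have h3 : Real.cos (3*θ) = 4 * Real.cos θ ^ 3 - 3 * Real.cos θ := Real.cos_three_mul θ
  set c := Real.cos θ
  have key : (c+1) * (8*c^3 - 4*c^2 - 4*c + 1) = 0 := by
    have := h; rw [h4, h3] at this; nlinarith [this]
  have h2 : 8*c^3 - 4*c^2 - 4*c + 1 = 0 := by
    rcases mul_eq_zero.mp key with hc | hc
    · exact absurd (by linarith : c = -1) h1
    · exact hc
  nlinarith [h2]

lemma cos_pi7_root : (2*Real.cos (π/7))^3 - (2*Real.cos (π/7))^2 - 2*(2*Real.cos (π/7)) + 1 = 0 := by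
  apply cubic_of_cos
  · rw [show 4*(π/7) = π - 3*(π/7) by ring, Real.cos_pi_sub]
  · have : Real.cos π < Real.cos (π/7) := by
      apply Real.cos_lt_cos_of_nonneg_of_le_pi (by positivity) le_rfl (by linarith [Real.pi_pos])
    rw [Real.cos_pi] at this; linarith

lemma cos_3pi7_root : (2*Real.cos (3*π/7))^3 - (2*Real.cos (3*π/7))^2 - 2*(2*Real.cos (3*π/7)) + 1 = 0 := by
  apply cubic_of_cos
  · rw [show 4*(3*π/7) = (π - 3*(3*π/7)) + 2*π by ring, Real.cos_add_two_pi, Real.cos_pi_sub]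
  · have : Real.cos π < Real.cos (3*π/7) := by
      apply Real.cos_lt_cos_of_nonneg_of_le_pi (by positivity) le_rfl (by linarith [Real.pi_pos])
    rw [Real.cos_pi] at this; linarith

lemma cos_5pi7_root : (2*Real.cos (5*π/7))^3 - (2*Real.cos (5*π/7))^2 - 2*(2*Real.cos (5*π/7)) + 1 = 0 := by
  apply cubic_of_cos
  · rw [show 4*(5*π/7) = (π - 3*(5*π/7)) + 2*π + 2*π by ring, Real.cos_add_two_pi,
      Real.cos_add_two_pi, Real.cos_pi_sub]
  · have : Real.cos π < Real.cos (5*π/7) := by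
      apply Real.cos_lt_cos_of_nonneg_of_le_pi (by positivity) le_rfl (by linarith [Real.pi_pos])
    rw [Real.cos_pi] at this; linarith
lemma cos_mono {a b : ℝ} (ha : 0 ≤ a) (hb : b ≤ π) (h : a < b) : Real.cos b < Real.cos a :=
  Real.cos_lt_cos_of_nonneg_of_le_pi ha hb h

lemma r3_bounds : 1.7 < 2*Real.cos (π/7) ∧ 2*Real.cos (π/7) < 2 := by
  constructor
  · have h := cos_mono (by positivity) (by linarith [Real.pi_pos]) (show π/7 < π/6 by linarith [Real.pi_pos])
    rw [Real.cos_pi_div_six] at h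
    have h3 : (1.7:ℝ) < 2 * (Real.sqrt 3 / 2) := by
      nlinarith [Real.sq_sqrt (by norm_num : (3:ℝ) ≥ 0), Real.sqrt_nonneg 3]
    linarith
  · have h := cos_mono le_rfl (by linarith [Real.pi_pos]) (show 0 < π/7 by positivity)
    rw [Real.cos_zero] at h; linarith

lemma r2_bounds : 0 < 2*Real.cos (3*π/7) ∧ 2*Real.cos (3*π/7) < 1 := by
  constructor
  · have h := cos_mono (by positivity) le_rfl (show 3*π/7 < π by linarith [Real.pi_pos])
    have h2 := cos_mono (by positivity) (by linarith [Real.pi_pos]) (show 3*π/7 < π/2 by linarith [Real.pi_pos])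
    rw [Real.cos_pi_div_two] at h2; linarith
  · have h := cos_mono (by positivity) (by linarith [Real.pi_pos]) (show π/3 < 3*π/7 by linarith [Real.pi_pos])
    rw [Real.cos_pi_div_three] at h; linarith

lemma r1_bounds : -2 < 2*Real.cos (5*π/7) ∧ 2*Real.cos (5*π/7) < -1 := by
  constructor
  · have h := cos_mono (by positivity) le_rfl (show 5*π/7 < π by linarith [Real.pi_pos])
    rw [Real.cos_pi] at h; linarith
  · have h := cos_mono (by positivity) (by linarith [Real.pi_pos]) (show 2*π/3 < 5*π/7 by linarith [Real.pi_pos])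
    rw [show 2*π/3 = π - π/3 by ring, Real.cos_pi_sub, Real.cos_pi_div_three] at h
    linarith
lemma R3 (r μ : ℝ) (hr : r^3 - r^2 - 2*r + 1 = 0) (hr1 : 1.7 < r) (hr2 : r < 2)
    (hμ : 1 < μ) (hp : μ^3 - μ^2 - 2*μ + 1 ≤ 0) : μ ≤ r := by
  by_contra hc
  push_neg at hc
  have hfac : 0 < μ^2 + μ*r + r^2 - μ - r - 2 := by nlinarith
  nlinarith [mul_pos (sub_pos.mpr hc) hfac]

lemma R2 (r μ : ℝ) (hr : r^3 - r^2 - 2*r + 1 = 0) (hr1 : 0 < r) (hr2 : r < 1)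
    (hμ0 : 0 < μ) (hμ1 : μ < 1) (hp : μ^3 - μ^2 - 2*μ + 1 ≤ 0) : r ≤ μ := by
  by_contra hc
  push_neg at hc
  have h1 : μ^2 ≤ μ := by nlinarith
  have h2 : r^2 ≤ r := by nlinarith
  have h3 : μ*r < 1 := by nlinarith
  have hfac : 0 < -(μ^2 + μ*r + r^2 - μ - r - 2) := by linarith
  nlinarith [mul_pos (sub_pos.mpr hc) hfac]

lemma R1 (r μ : ℝ) (hr : r^3 - r^2 - 2*r + 1 = 0) (hr1 : -2 < r) (hr2 : r < -1)
    (hμ2 : -2 < μ) (hμ1 : μ < -1) (hp : μ^3 - μ^2 - 2*μ + 1 ≤ 0) : μ ≤ r := by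
  by_contra hc
  push_neg at hc
  have h1 : 1 < μ^2 := by nlinarith
  have h2 : 1 < r^2 := by nlinarith
  have h3 : 1 < μ*r := by nlinarith [mul_pos (by linarith : (0:ℝ) < -μ) (by linarith : (0:ℝ) < -r)]
  have hfac : 0 < μ^2 + μ*r + r^2 - μ - r - 2 := by linarith
  nlinarith [mul_pos (sub_pos.mpr hc) hfac]

lemma sqrt5_gt : 2.23 < Real.sqrt 5 := by
  nlinarith [Real.sq_sqrt (by norm_num : (5:ℝ) ≥ 0), Real.sqrt_nonneg 5]
lemma sqrt5_lt : Real.sqrt 5 < 2.24 := by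
  nlinarith [Real.sq_sqrt (by norm_num : (5:ℝ) ≥ 0), Real.sqrt_nonneg 5]

lemma r2_le (r : ℝ) (hr : r^3 - r^2 - 2*r + 1 = 0) (hr1 : 0 < r) (hr2 : r < 1) :
    r ≤ (Real.sqrt 5 - 1)/2 := by
  have h5 := Real.sq_sqrt (by norm_num : (5:ℝ) ≥ 0)
  set y := (Real.sqrt 5 - 1)/2 with hy_def
  have hy : y^2 + y - 1 = 0 := by rw [hy_def]; nlinarith [h5]
  have hy1 : 0.6 < y := by rw [hy_def]; have := sqrt5_gt; linarith
  have hy2 : y < 0.62 := by rw [hy_def]; have := sqrt5_lt; linarith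
  by_contra hc
  push_neg at hc
  have h1 : r^2 ≤ r := by nlinarith
  have h2 : y^2 ≤ y := by nlinarith
  have h3 : r*y < 1 := by nlinarith
  have hfac : 0 < -(r^2 + r*y + y^2 - r - y - 2) := by linarith
  have hpy : y^3 - y^2 - 2*y + 1 = y - 1 := by nlinarith [hy]
  nlinarith [mul_pos (sub_pos.mpr hc) hfac]

lemma r1_ge (r : ℝ) (hr : r^3 - r^2 - 2*r + 1 = 0) (hr1 : -2 < r) (hr2 : r < -1) :
    -(1 + Real.sqrt 5)/2 ≤ r := by
  have h5 := Real.sq_sqrt (by norm_num : (5:ℝ) ≥ 0)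
  set y := -(1 + Real.sqrt 5)/2 with hy_def
  have hy : y^2 + y - 1 = 0 := by rw [hy_def]; nlinarith [h5]
  have hy1 : -1.62 < y := by rw [hy_def]; have := sqrt5_lt; linarith
  have hy2 : y < -1.61 := by rw [hy_def]; have := sqrt5_gt; linarith
  by_contra hc
  push_neg at hc
  have h1 : 1 < r^2 := by nlinarith
  have h2 : 1 < y^2 := by nlinarith
  have h3 : 1 < r*y := by nlinarith [mul_pos (by linarith : (0:ℝ) < -r) (by linarith : (0:ℝ) < -y)]
  have hfac : 0 < r^2 + r*y + y^2 - r - y - 2 := by linarith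
  have hpy : y^3 - y^2 - 2*y + 1 = y - 1 := by nlinarith [hy]
  nlinarith [mul_pos (sub_pos.mpr hc) hfac, hpy]
set_option maxHeartbeats 1000000 in
/-- Main scalar lemma. -/
lemma scalar_main (μ s t g δ β : ℝ) (hμ0 : μ ≠ 0) (hμ1 : μ ≠ 1)
    (hs : 0 < s) (ht : 0 ≤ t) (hg : 0 ≤ g) (hβ : 0 ≤ β) (hδt : δ ≤ t)
    (hE0 : s = β + (μ-1)^2*t)
    (hE1 : (μ-1)*t - β + μ*g = μ*s)
    (hE2 : μ^2*δ = (μ+1)^2*s - (2*μ^2+2*μ-1)*g)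
    (hGs : μ^2*g ≤ s) :
    μ ∈ Set.Icc (-(1 + Real.sqrt 5)/2) (2 * Real.cos (5*Real.pi/7))
      ∪ Set.Icc (-1 : ℝ) ((1 - Real.sqrt 5)/2)
      ∪ Set.Icc (2 * Real.cos (3*Real.pi/7)) ((Real.sqrt 5 - 1)/2)
      ∪ Set.Icc (1 : ℝ) (2 * Real.cos (Real.pi/7)) := by
  have h5 := Real.sq_sqrt (by norm_num : (5:ℝ) ≥ 0)
  have h5n := Real.sqrt_nonneg 5
  have H1 : μ*(μ-1)*t + μ*g = (μ+1)*s := by linarith [hE0, hE1]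
  simp only [Set.mem_union, Set.mem_Icc]
  rcases lt_trichotomy μ 0 with hneg | hzero | hpos
  · -- μ < 0
    rcases le_or_gt (-1) μ with hm1 | hm1
    · -- -1 ≤ μ < 0 : interval 2
      have k1 : μ*(s - (μ-1)^2*t) ≤ 0 :=
        mul_nonpos_of_nonpos_of_nonneg hneg.le (by nlinarith [hE0, hβ, sq_nonneg (μ-1)])
      have k2 : (μ-1)*(μ*(μ-1)*t + μ*g) = (μ-1)*((μ+1)*s) := by rw [H1]
      have k3 : 0 ≤ μ*(μ-1)*g := mul_nonneg (le_of_lt (mul_pos_of_neg_of_neg hneg (by linarith))) hg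
      have hq2 : 0 ≤ (μ^2-μ-1)*s := by linarith [k1, k2, k3]
      have hq : 0 ≤ μ^2-μ-1 := by
        by_contra hcon; push_neg at hcon
        linarith [mul_neg_of_neg_of_pos hcon hs]
      have hup : μ ≤ (1 - Real.sqrt 5)/2 := by
        have hsq : Real.sqrt 5 ≤ 1-2*μ := by
          rw [show (1-2*μ:ℝ) = Real.sqrt ((1-2*μ)^2) from (Real.sqrt_sq (by linarith)).symm]
          exact Real.sqrt_le_sqrt (by nlinarith [hq])
        linarith
      exact Or.inl (Or.inl (Or.inr ⟨hm1, hup⟩))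
    · -- μ < -1 : interval 1
      have k1 : 0 ≤ μ*(μ-1)*t := mul_nonneg (le_of_lt (mul_pos_of_neg_of_neg hneg (by linarith))) ht
      have k2 : μ*g ≤ (μ+1)*s := by linarith [H1, k1]
      have k3 : μ*((μ+1)*s) ≤ μ*(μ*g) := mul_le_mul_of_nonpos_left k2 hneg.le
      have hq2 : (μ^2+μ-1)*s ≤ 0 := by linarith [k3, hGs]
      have hq : μ^2+μ-1 ≤ 0 := by
        by_contra hcon; push_neg at hcon
        linarith [mul_pos hcon hs]
      have hlow : -(1 + Real.sqrt 5)/2 ≤ μ := by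
        have hsq : -(2*μ+1) ≤ Real.sqrt 5 := by
          rw [show (-(2*μ+1):ℝ) = Real.sqrt ((-(2*μ+1))^2) from (Real.sqrt_sq (by linarith)).symm]
          exact Real.sqrt_le_sqrt (by nlinarith)
        linarith
      rcases eq_or_lt_of_le hq with heq | hlt
      · -- μ = -(1+√5)/2 exactly
        have hμval : Real.sqrt 5 = -(2*μ+1) := by
          rw [show (5:ℝ) = (-(2*μ+1))^2 by nlinarith]
          exact Real.sqrt_sq (by linarith)
        have h1b := r1_bounds
        have hr1le := r1_ge _ cos_5pi7_root h1b.1 h1b.2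
        exact Or.inl (Or.inl (Or.inl ⟨hlow, by linarith [hr1le, hμval]⟩))
      · -- strict : derive star and p ≤ 0
        have k0 : μ^2*δ ≤ μ^2*t := mul_le_mul_of_nonneg_left hδt (sq_nonneg μ)
        have k4 : (μ-1)*(μ^2*t) ≤ (μ-1)*(μ^2*δ) := mul_le_mul_of_nonpos_left k0 (by linarith)
        have k5 : (μ-1)*(μ^2*δ) = (μ-1)*((μ+1)^2*s - (2*μ^2+2*μ-1)*g) := by rw [hE2]
        have k6 : μ*(μ*(μ-1)*t + μ*g) = μ*((μ+1)*s) := by rw [H1]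
        have star : 0 ≤ (μ+1)*(μ^2-μ-1)*s + (-2*μ^3+μ^2+3*μ-1)*g := by linarith [k4, k5, k6]
        have hsq1 : 0 < μ^2-μ-1 := by nlinarith [sq_nonneg (μ+1)]
        have hfac1 : (μ+1)*(μ^2-μ-1)*s < 0 := by
          have h1 := mul_pos hsq1 hs
          have h2 := mul_neg_of_neg_of_pos (show μ+1 < 0 by linarith) h1
          linarith [h2]
        have hCoe : 0 < -2*μ^3+μ^2+3*μ-1 := by
          by_contra hcon; push_neg at hcon
          have := mul_nonpos_of_nonpos_of_nonneg hcon hg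
          linarith [star, hfac1]
        have k7 : 0 ≤ μ^2*((μ+1)*(μ^2-μ-1)*s + (-2*μ^3+μ^2+3*μ-1)*g) :=
          mul_nonneg (sq_nonneg μ) star
        have k8 : 0 ≤ (-2*μ^3+μ^2+3*μ-1)*(s - μ^2*g) := mul_nonneg hCoe.le (by linarith)
        have hkey : 0 ≤ (μ^5-4*μ^3+3*μ-1)*s := by linarith [k7, k8]
        have hp : μ^3-μ^2-2*μ+1 ≤ 0 := by
          by_contra hcon; push_neg at hcon
          have h1 := mul_pos (mul_pos hcon hs) (show 0 < -(μ^2+μ-1) by linarith)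
          linarith [h1, hkey]
        have h1b := r1_bounds
        have hμ2 : -2 < μ := by linarith [sqrt5_lt, hlow]
        exact Or.inl (Or.inl (Or.inl ⟨hlow, R1 _ μ cos_5pi7_root h1b.1 h1b.2 hμ2 hm1 hp⟩))
  · exact absurd hzero hμ0
  · -- μ > 0
    rcases lt_trichotomy μ 1 with hl1 | he1 | hg1
    · -- 0 < μ < 1 : interval 3
      have k1 : μ*(μ-1)*t ≤ 0 := mul_nonpos_of_nonpos_of_nonneg (le_of_lt (mul_neg_of_pos_of_neg hpos (by linarith))) ht
      have k2 : (μ+1)*s ≤ μ*g := by linarith [H1, k1]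
      have k3 : μ*((μ+1)*s) ≤ μ*(μ*g) := mul_le_mul_of_nonneg_left k2 hpos.le
      have hq2 : (μ^2+μ-1)*s ≤ 0 := by linarith [k3, hGs]
      have hq : μ^2+μ-1 ≤ 0 := by
        by_contra hcon; push_neg at hcon
        linarith [mul_pos hcon hs]
      have hup : μ ≤ (Real.sqrt 5 - 1)/2 := by
        have hsq : 2*μ+1 ≤ Real.sqrt 5 := by
          rw [show (2*μ+1:ℝ) = Real.sqrt ((2*μ+1)^2) from (Real.sqrt_sq (by linarith)).symm]
          exact Real.sqrt_le_sqrt (by nlinarith)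
        linarith
      rcases eq_or_lt_of_le hq with heq | hlt
      · have hμval : Real.sqrt 5 = 2*μ+1 := by
          rw [show (5:ℝ) = (2*μ+1)^2 by nlinarith]
          exact Real.sqrt_sq (by linarith)
        have h2b := r2_bounds
        have hr2le := r2_le _ cos_3pi7_root h2b.1 h2b.2
        exact Or.inl (Or.inr ⟨by linarith [hr2le, hμval], hup⟩)
      · have k0 : μ^2*δ ≤ μ^2*t := mul_le_mul_of_nonneg_left hδt (sq_nonneg μ)
        have k4 : (μ-1)*(μ^2*t) ≤ (μ-1)*(μ^2*δ) := mul_le_mul_of_nonpos_left k0 (by linarith)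
        have k5 : (μ-1)*(μ^2*δ) = (μ-1)*((μ+1)^2*s - (2*μ^2+2*μ-1)*g) := by rw [hE2]
        have k6 : μ*(μ*(μ-1)*t + μ*g) = μ*((μ+1)*s) := by rw [H1]
        have star : 0 ≤ (μ+1)*(μ^2-μ-1)*s + (-2*μ^3+μ^2+3*μ-1)*g := by linarith [k4, k5, k6]
        have hsq1 : μ^2-μ-1 < 0 := by nlinarith [mul_pos hpos (sub_pos.mpr hl1)]
        have hfac1 : (μ+1)*(μ^2-μ-1)*s < 0 := by
          have h1 := mul_pos hs (show 0 < -(μ^2-μ-1) by linarith)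
          have h2 := mul_pos (show 0 < μ+1 by linarith) h1
          linarith [h2]
        have hCoe : 0 < -2*μ^3+μ^2+3*μ-1 := by
          by_contra hcon; push_neg at hcon
          have := mul_nonpos_of_nonpos_of_nonneg hcon hg
          linarith [star, hfac1]
        have k7 : 0 ≤ μ^2*((μ+1)*(μ^2-μ-1)*s + (-2*μ^3+μ^2+3*μ-1)*g) :=
          mul_nonneg (sq_nonneg μ) star
        have k8 : 0 ≤ (-2*μ^3+μ^2+3*μ-1)*(s - μ^2*g) := mul_nonneg hCoe.le (by linarith)
        have hkey : 0 ≤ (μ^5-4*μ^3+3*μ-1)*s := by linarith [k7, k8]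
        have hp : μ^3-μ^2-2*μ+1 ≤ 0 := by
          by_contra hcon; push_neg at hcon
          have h1 := mul_pos (mul_pos hcon hs) (show 0 < -(μ^2+μ-1) by linarith)
          linarith [h1, hkey]
        have h2b := r2_bounds
        exact Or.inl (Or.inr ⟨R2 _ μ cos_3pi7_root h2b.1 h2b.2 hpos hl1 hp, hup⟩)
    · exact absurd he1 hμ1
    · -- μ > 1 : interval 4
      have k1 : 0 ≤ μ^2*(s - (μ-1)^2*t) := mul_nonneg (sq_nonneg μ) (by nlinarith [hE0, hβ, sq_nonneg (μ-1)])
      have k2 : μ*(μ-1)*(μ*(μ-1)*t + μ*g) = μ*(μ-1)*((μ+1)*s) := by rw [H1]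
      have k3 : 0 ≤ (μ-1)*(s - μ^2*g) := mul_nonneg (by linarith) (by linarith)
      have hps : (μ^3-μ^2-2*μ+1)*s ≤ 0 := by linarith [k1, k2, k3]
      have hp : μ^3-μ^2-2*μ+1 ≤ 0 := by
        by_contra hcon; push_neg at hcon
        linarith [mul_pos hcon hs]
      have h3b := r3_bounds
      exact Or.inr ⟨hg1.le, R3 _ μ cos_pi7_root h3b.1 h3b.2 hg1 hp⟩

lemma dot_sym {k : ℕ} (A : Matrix (Fin k) (Fin k) ℝ) (hA : Aᵀ = A) (u v : Fin k → ℝ) :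
    (A.mulVec u) ⬝ᵥ v = u ⬝ᵥ A.mulVec v := by
  rw [dotProduct_comm, dotProduct_mulVec, ← mulVec_transpose, hA, dotProduct_comm]

set_option maxHeartbeats 1000000 in
theorem stmt1 {n m p : ℕ}
    (A1 : Matrix (Fin n) (Fin n) ℝ) (A2 : Matrix (Fin m) (Fin m) ℝ)
    (B1 : Matrix (Fin m) (Fin n) ℝ) (B2 : Matrix (Fin p) (Fin m) ℝ)
    (hA1 : A1.PosDef) (hA2 : A2.PosSemidef)
    (hS1 : (A2 + B1 * A1⁻¹ * B1ᵀ).PosDef)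
    (hS2 : (B2 * (A2 + B1 * A1⁻¹ * B1ᵀ)⁻¹ * B2ᵀ).PosDef)
    (μ : ℝ) (x1 : Fin n → ℝ) (x2 : Fin m → ℝ) (x3 : Fin p → ℝ)
    (hx : ¬ (x1 = 0 ∧ x2 = 0 ∧ x3 = 0))
    (h1 : A1.mulVec x1 + B1ᵀ.mulVec x2 = μ • A1.mulVec x1)
    (h2 : B1.mulVec x1 - A2.mulVec x2 + B2ᵀ.mulVec x3
      = μ • (A2 + B1 * A1⁻¹ * B1ᵀ).mulVec x2)
    (h3 : B2.mulVec x2 = μ • (B2 * (A2 + B1 * A1⁻¹ * B1ᵀ)⁻¹ * B2ᵀ).mulVec x3) :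
    μ ∈ Set.Icc (-(1 + Real.sqrt 5)/2) (2 * Real.cos (5*Real.pi/7))
      ∪ Set.Icc (-1 : ℝ) ((1 - Real.sqrt 5)/2)
      ∪ Set.Icc (2 * Real.cos (3*Real.pi/7)) ((Real.sqrt 5 - 1)/2)
      ∪ Set.Icc (1 : ℝ) (2 * Real.cos (Real.pi/7)) := by
  set S1 : Matrix (Fin m) (Fin m) ℝ := A2 + B1 * A1⁻¹ * B1ᵀ with hS1def
  set S2 : Matrix (Fin p) (Fin p) ℝ := B2 * S1⁻¹ * B2ᵀ with hS2def
  -- invertibility and symmetry facts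
  have hdA1 : IsUnit A1.det := (isUnit_iff_isUnit_det A1).mp hA1.isUnit
  have hdS1 : IsUnit S1.det := (isUnit_iff_isUnit_det S1).mp hS1.isUnit
  have hdS2 : IsUnit S2.det := (isUnit_iff_isUnit_det S2).mp hS2.isUnit
  have hA1t : A1ᵀ = A1 := hA1.isHermitian
  have hS1t : S1ᵀ = S1 := hS1.isHermitian
  have hA1it : (A1⁻¹)ᵀ = A1⁻¹ := by rw [transpose_nonsing_inv, hA1t]
  have hS1it : (S1⁻¹)ᵀ = S1⁻¹ := by rw [transpose_nonsing_inv, hS1t]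
  -- cancellation helpers
  have cA1 : ∀ v, A1⁻¹.mulVec (A1.mulVec v) = v := fun v => by
    rw [mulVec_mulVec, nonsing_inv_mul A1 hdA1, one_mulVec]
  have cS1 : ∀ v, S1⁻¹.mulVec (S1.mulVec v) = v := fun v => by
    rw [mulVec_mulVec, nonsing_inv_mul S1 hdS1, one_mulVec]
  have cS1' : ∀ v, S1.mulVec (S1⁻¹.mulVec v) = v := fun v => by
    rw [mulVec_mulVec, mul_nonsing_inv S1 hdS1, one_mulVec]
  -- vector abbreviations
  set P : Fin m → ℝ := B1.mulVec x1 with hP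
  set Q : Fin m → ℝ := A2.mulVec x2 with hQ
  set R : Fin m → ℝ := B2ᵀ.mulVec x3 with hR
  -- scalars
  set t : ℝ := x1 ⬝ᵥ A1.mulVec x1 with ht_def
  set β : ℝ := x2 ⬝ᵥ Q with hβ_def
  set g : ℝ := x3 ⬝ᵥ S2.mulVec x3 with hg_def
  set s : ℝ := x2 ⬝ᵥ S1.mulVec x2 with hs_def
  have ht : 0 ≤ t := by simpa using hA1.posSemidef.dotProduct_mulVec_nonneg x1
  have hβ : 0 ≤ β := by simpa using hA2.dotProduct_mulVec_nonneg x2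
  have hg : 0 ≤ g := by simpa using hS2.posSemidef.dotProduct_mulVec_nonneg x3
  -- rearranged equation 1
  have f1 : B1ᵀ.mulVec x2 = (μ-1) • A1.mulVec x1 := by
    funext i
    have := congrFun h1 i
    simp only [Pi.add_apply, Pi.smul_apply, smul_eq_mul] at this ⊢
    linarith
  -- g = R ⬝ᵥ S1⁻¹ R
  have c4 : g = R ⬝ᵥ S1⁻¹.mulVec R := by
    rw [hg_def, hS2def, hR]
    rw [show (B2 * S1⁻¹ * B2ᵀ).mulVec x3 = B2.mulVec (S1⁻¹.mulVec (B2ᵀ.mulVec x3)) by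
      rw [mulVec_mulVec, mulVec_mulVec]]
    rw [dotProduct_mulVec, ← mulVec_transpose]
  -- case μ = 0
  by_cases hμ0 : μ = 0
  · exfalso
    subst hμ0
    have hB2x2 : B2.mulVec x2 = 0 := by simpa using h3
    have hf1 : B1ᵀ.mulVec x2 = -(A1.mulVec x1) := by
      rw [f1]; funext i; simp [Pi.smul_apply]
    -- dot h2 with x2
    have e1 : x2 ⬝ᵥ P - β + x2 ⬝ᵥ R = 0 := by
      have := congrArg (fun v => x2 ⬝ᵥ v) h2
      simpa [dotProduct_add, dotProduct_sub, hβ_def] using this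
    have hx2R : x2 ⬝ᵥ R = 0 := by
      rw [hR, dotProduct_mulVec, ← mulVec_transpose, transpose_transpose, hB2x2]
      simp
    have hx2P : x2 ⬝ᵥ P = -t := by
      rw [hP, dotProduct_mulVec, ← mulVec_transpose, hf1, ht_def]
      rw [neg_dotProduct, dotProduct_comm]
    have htz : t = 0 := by linarith
    have hx1 : x1 = 0 := by
      by_contra hc
      exact absurd htz (ne_of_gt (by simpa using hA1.dotProduct_mulVec_pos hc))
    have hB1x2 : B1ᵀ.mulVec x2 = 0 := by rw [hf1, hx1]; simp
    have hsz : x2 ⬝ᵥ S1.mulVec x2 = 0 := by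
      rw [hS1def, add_mulVec, dotProduct_add]
      rw [show (B1 * A1⁻¹ * B1ᵀ).mulVec x2 = B1.mulVec (A1⁻¹.mulVec (B1ᵀ.mulVec x2)) by
        rw [mulVec_mulVec, mulVec_mulVec]]
      rw [hB1x2]
      have hβz : β = 0 := by linarith
      simp [← hQ, ← hβ_def, hβz]
    have hx2 : x2 = 0 := by
      by_contra hc
      exact absurd hsz (ne_of_gt (by simpa using hS1.dotProduct_mulVec_pos hc))
    have hPz : P = 0 := by rw [hP, hx1, mulVec_zero]
    have hQz : Q = 0 := by rw [hQ, hx2, mulVec_zero]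
    have hRz : R = 0 := by
      have h2' := h2
      rw [hPz, hQz, hx2] at h2'
      simpa using h2'
    have hgz : g = 0 := by rw [c4, hRz]; simp
    have hx3 : x3 = 0 := by
      by_contra hc
      exact absurd hgz (ne_of_gt (by simpa [hg_def] using hS2.dotProduct_mulVec_pos hc))
    exact hx ⟨hx1, hx2, hx3⟩
  -- case μ = 1
  by_cases hμ1 : μ = 1
  · subst hμ1
    have h3b := r3_bounds
    simp only [Set.mem_union, Set.mem_Icc]
    exact Or.inr ⟨le_refl 1, by linarith [h3b.1]⟩
  -- main case
  have hx2 : x2 ≠ 0 := by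
    intro hx2z
    have hA1x1 : A1.mulVec x1 = 0 := by
      have : (μ-1) • A1.mulVec x1 = 0 := by rw [← f1, hx2z]; simp
      have hne : μ - 1 ≠ 0 := sub_ne_zero.mpr hμ1
      funext i
      have := congrFun this i
      simp only [Pi.smul_apply, smul_eq_mul, Pi.zero_apply] at this
      exact (mul_eq_zero.mp this).resolve_left hne
    have hx1 : x1 = 0 := by
      by_contra hc
      have := hA1.dotProduct_mulVec_pos hc
      rw [hA1x1] at this
      simp at this
    have hS2x3 : S2.mulVec x3 = 0 := by
      have : μ • S2.mulVec x3 = 0 := by rw [← h3, hx2z]; simp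
      funext i
      have := congrFun this i
      simp only [Pi.smul_apply, smul_eq_mul, Pi.zero_apply] at this
      exact (mul_eq_zero.mp this).resolve_left hμ0
    have hx3 : x3 = 0 := by
      by_contra hc
      have := hS2.dotProduct_mulVec_pos hc
      rw [hS2x3] at this
      simp at this
    exact hx ⟨hx1, hx2z, hx3⟩
  have hs : 0 < s := by simpa using hS1.dotProduct_mulVec_pos hx2
  -- key vector identities
  have hs1x : S1.mulVec x2 = Q + (μ-1) • P := by
    rw [hS1def, add_mulVec, ← hQ]
    congr 1
    rw [show (B1 * A1⁻¹ * B1ᵀ).mulVec x2 = B1.mulVec (A1⁻¹.mulVec (B1ᵀ.mulVec x2)) by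
      rw [mulVec_mulVec, mulVec_mulVec]]
    rw [f1, mulVec_smul, cA1, mulVec_smul, hP]
  have f2 : μ • P = (μ+1) • S1.mulVec x2 - R := by
    funext i
    have hh := congrFun h2 i
    have hh1 := congrFun hs1x i
    simp only [Pi.add_apply, Pi.sub_apply, Pi.smul_apply, smul_eq_mul] at hh hh1 ⊢
    linear_combination hh - hh1
  -- scalar identities
  have sP : x2 ⬝ᵥ P = (μ-1) * t := by
    rw [hP, dotProduct_mulVec, ← mulVec_transpose, f1, smul_dotProduct, ht_def,
      dotProduct_comm, smul_eq_mul]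
  have sR : x2 ⬝ᵥ R = μ * g := by
    rw [hR, dotProduct_mulVec, ← mulVec_transpose, transpose_transpose, h3,
      smul_dotProduct, smul_eq_mul, hg_def]
    congr 1
    exact dotProduct_comm _ _
  have E1 : (μ-1)*t - β + μ*g = μ*s := by
    have h := congrArg (fun v => x2 ⬝ᵥ v) h2
    simp only [dotProduct_add, dotProduct_sub, dotProduct_smul, smul_eq_mul] at h
    rw [sP, sR, ← hβ_def, ← hs_def] at h
    linarith [h]
  have E0 : s = β + (μ-1)^2*t := by
    rw [hs_def, hs1x, dotProduct_add, ← hβ_def, dotProduct_smul, smul_eq_mul, sP]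
    ring
  have cA1' : ∀ v, A1.mulVec (A1⁻¹.mulVec v) = v := fun v => by
    rw [mulVec_mulVec, mul_nonsing_inv A1 hdA1, one_mulVec]
  set δ : ℝ := P ⬝ᵥ S1⁻¹.mulVec P with hδ_def
  -- E2
  have E2 : μ^2*δ = (μ+1)^2*s - (2*μ^2+2*μ-1)*g := by
    have lhs_eq : (μ • P) ⬝ᵥ S1⁻¹.mulVec (μ • P) = μ^2*δ := by
      rw [mulVec_smul, dotProduct_smul, smul_dotProduct, smul_eq_mul, smul_eq_mul, hδ_def]
      ring
    rw [← lhs_eq, f2]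
    rw [mulVec_sub, mulVec_smul, cS1]
    simp only [sub_dotProduct, dotProduct_sub, smul_dotProduct, dotProduct_smul, smul_eq_mul]
    have d1 : (S1.mulVec x2) ⬝ᵥ x2 = s := by rw [dotProduct_comm]
    have d2 : (S1.mulVec x2) ⬝ᵥ (S1⁻¹.mulVec R) = μ*g := by
      rw [dot_sym S1 hS1t, cS1', sR]
    have d3 : R ⬝ᵥ x2 = μ*g := by rw [dotProduct_comm]; exact sR
    have d4 : R ⬝ᵥ S1⁻¹.mulVec R = g := c4.symm
    rw [d1, d2, d3, d4]
    ring
  -- δ ≤ t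
  have hδt : δ ≤ t := by
    set u : Fin m → ℝ := S1⁻¹.mulVec P with hu_def
    have hS1u : S1.mulVec u = P := cS1' P
    set w : Fin n → ℝ := A1⁻¹.mulVec (B1ᵀ.mulVec u) with hw_def
    have hA1w : A1.mulVec w = B1ᵀ.mulVec u := cA1' _
    have epos : 0 ≤ (x1 - w) ⬝ᵥ A1.mulVec (x1 - w) := by
      simpa using hA1.posSemidef.dotProduct_mulVec_nonneg (x1 - w)
    have hA2u : 0 ≤ u ⬝ᵥ A2.mulVec u := by simpa using hA2.dotProduct_mulVec_nonneg u
    simp only [mulVec_sub, hA1w, sub_dotProduct, dotProduct_sub] at epos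
    have d1 : x1 ⬝ᵥ A1.mulVec x1 = t := ht_def.symm
    have d2 : x1 ⬝ᵥ B1ᵀ.mulVec u = δ := by
      rw [dotProduct_mulVec, ← mulVec_transpose, transpose_transpose, ← hP, hδ_def]
    have d3 : w ⬝ᵥ A1.mulVec x1 = δ := by
      rw [hw_def, dot_sym A1⁻¹ hA1it, cA1, dotProduct_comm]
      exact d2
    have d4 : w ⬝ᵥ B1ᵀ.mulVec u = δ - u ⬝ᵥ A2.mulVec u := by
      have hMu : B1.mulVec (A1⁻¹.mulVec (B1ᵀ.mulVec u)) = S1.mulVec u - A2.mulVec u := by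
        rw [hS1def, add_mulVec, mulVec_mulVec, mulVec_mulVec]
        abel
      have : w ⬝ᵥ B1ᵀ.mulVec u = u ⬝ᵥ B1.mulVec w := by
        rw [dotProduct_mulVec u B1, ← mulVec_transpose B1 u, dotProduct_comm]
      rw [this, hw_def, hMu, hS1u, dotProduct_sub, dotProduct_comm u P, ← hδ_def]
    rw [d1, d2, d3, d4] at epos
    linarith
  -- μ² g ≤ s
  have hGs : μ^2*g ≤ s := by
    set u2 : Fin m → ℝ := S1⁻¹.mulVec R with hu2_def
    have hS1u2 : S1.mulVec u2 = R := cS1' R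
    have epos : 0 ≤ (x2 - μ • u2) ⬝ᵥ S1.mulVec (x2 - μ • u2) := by
      simpa using hS1.posSemidef.dotProduct_mulVec_nonneg (x2 - μ • u2)
    simp only [mulVec_sub, mulVec_smul, hS1u2, sub_dotProduct, dotProduct_sub,
      smul_dotProduct, dotProduct_smul, smul_eq_mul] at epos
    have d2 : u2 ⬝ᵥ S1.mulVec x2 = μ*g := by
      rw [← dot_sym S1 hS1t, hS1u2, dotProduct_comm]; exact sR
    have d3 : u2 ⬝ᵥ R = g := by rw [hu2_def, dotProduct_comm]; exact c4.symm
    rw [← hs_def, d2, d3, sR] at epos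
    nlinarith [epos]
  exact scalar_main μ s t g δ β hμ0 hμ1 hs ht hg hβ hδt E0 E1 E2 hGs
end

section
/- Let $A_1$, $S_1 = A_2 + B_1 A_1^{-1} B_1^T$, $S_2 = A_3 + B_2 S_1^{-1} B_2^T$ be invertible real matrices. Define $\mathcal{A} = \begin{pmatrix} A_1 & B_1^T & 0 \\ B_1 & -A_2 & B_2^T \\ 0 & B_2 & A_3 \end{pmatrix}$ and the block lower-triangular preconditioner $\mathcal{P}_L = \begin{pmatrix} A_1 & 0 & 0 \\ B_1 & -S_1 & 0 \\ 0 & B_2 & S_2 \end{pmatrix}$. Then $\mathcal{P}_L^{-1}\mathcal{A} = \begin{pmatrix} \mathrm{I} & A_1^{-1}B_1^T & 0 \\ 0 & \mathrm{I} & -S_1^{-1}B_2^T \\ 0 & 0 & \mathrm{I} \end{pmatrix}$, and in particular all eigenvalues of $\mathcal{P}_L^{-1}\mathcal{A}$ equal $1$. -/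
open Matrix

theorem stmt3 {n m p : ℕ}
    (A1 : Matrix (Fin n) (Fin n) ℝ) (A2 : Matrix (Fin m) (Fin m) ℝ)
    (A3 : Matrix (Fin p) (Fin p) ℝ)
    (B1 : Matrix (Fin m) (Fin n) ℝ) (B2 : Matrix (Fin p) (Fin m) ℝ)
    (S1 S2 : Matrix _ _ ℝ)
    (hS1 : S1 = A2 + B1 * A1⁻¹ * B1ᵀ)
    (hS2 : S2 = A3 + B2 * S1⁻¹ * B2ᵀ)
    (hA1 : IsUnit A1.det) (hS1u : IsUnit S1.det) (hS2u : IsUnit S2.det)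
    (𝒜 PL : Matrix ((Fin n ⊕ Fin m) ⊕ Fin p) ((Fin n ⊕ Fin m) ⊕ Fin p) ℝ)
    (h𝒜 : 𝒜 = Matrix.fromBlocks (Matrix.fromBlocks A1 B1ᵀ B1 (-A2))
      (Matrix.fromRows 0 B2ᵀ) (Matrix.fromCols 0 B2) A3)
    (hPL : PL = Matrix.fromBlocks (Matrix.fromBlocks A1 0 B1 (-S1))
      0 (Matrix.fromCols 0 B2) S2) :
    PL⁻¹ * 𝒜 = Matrix.fromBlocks (Matrix.fromBlocks 1 (A1⁻¹ * B1ᵀ) 0 1)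
      (Matrix.fromRows 0 (-(S1⁻¹ * B2ᵀ))) 0 1
    ∧ ∀ (μ : ℝ) (x : (Fin n ⊕ Fin m) ⊕ Fin p → ℝ), x ≠ 0 →
        (PL⁻¹ * 𝒜).mulVec x = μ • x → μ = 1 := by
  set R : Matrix ((Fin n ⊕ Fin m) ⊕ Fin p) ((Fin n ⊕ Fin m) ⊕ Fin p) ℝ :=
    Matrix.fromBlocks (Matrix.fromBlocks 1 (A1⁻¹ * B1ᵀ) 0 1)
      (Matrix.fromRows 0 (-(S1⁻¹ * B2ᵀ))) 0 1 with hR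
  have hPLR : PL * R = 𝒜 := by
    subst hPL h𝒜
    rw [hR]
    rw [Matrix.fromBlocks_multiply, Matrix.fromBlocks_multiply,
      Matrix.fromCols_mul_fromBlocks, Matrix.fromBlocks_mul_fromRows,
      Matrix.fromCols_mul_fromRows]
    have h1 : A1 * (A1⁻¹ * B1ᵀ) = B1ᵀ := by
      rw [← Matrix.mul_assoc, Matrix.mul_nonsing_inv A1 hA1, Matrix.one_mul]
    have h2 : S1 * (S1⁻¹ * B2ᵀ) = B2ᵀ := by
      rw [← Matrix.mul_assoc, Matrix.mul_nonsing_inv S1 hS1u, Matrix.one_mul]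
    have e1 : B1 * (A1⁻¹ * B1ᵀ) + -S1 = -A2 := by
      rw [hS1, Matrix.mul_assoc]; abel
    have e2 : -(B2 * (S1⁻¹ * B2ᵀ)) + S2 = A3 := by
      rw [hS2, Matrix.mul_assoc]; abel
    simp only [Matrix.mul_one, Matrix.one_mul, Matrix.mul_zero, Matrix.zero_mul,
      add_zero, zero_add, Matrix.neg_mul, Matrix.mul_neg, neg_neg, neg_zero, h1, h2, e1, e2]
  have hPLdet : IsUnit PL.det := by
    rw [hPL, Matrix.det_fromBlocks_zero₁₂, Matrix.det_fromBlocks_zero₁₂,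
      Matrix.det_neg]
    exact (hA1.mul ((isUnit_one.neg.pow _).mul hS1u)).mul hS2u
  have hmain : PL⁻¹ * 𝒜 = R := by
    rw [← hPLR, ← Matrix.mul_assoc, Matrix.nonsing_inv_mul PL hPLdet, Matrix.one_mul]
  refine ⟨by rw [hmain, hR], ?_⟩
  intro μ x hx hμ
  rw [hmain] at hμ
  -- N := R - 1 is nilpotent of order 3
  set N : Matrix ((Fin n ⊕ Fin m) ⊕ Fin p) ((Fin n ⊕ Fin m) ⊕ Fin p) ℝ := R - 1 with hN
  have hN3 : N * N * N = 0 := by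
    have h1 : (1 : Matrix ((Fin n ⊕ Fin m) ⊕ Fin p) ((Fin n ⊕ Fin m) ⊕ Fin p) ℝ) =
        Matrix.fromBlocks (Matrix.fromBlocks 1 0 0 1) 0 0 1 := by
      rw [Matrix.fromBlocks_one, Matrix.fromBlocks_one]
    rw [hN, hR, h1]
    simp only [sub_eq_add_neg, Matrix.fromBlocks_neg, Matrix.fromBlocks_add,
      add_neg_cancel, neg_zero, add_zero]
    simp [Matrix.fromBlocks_multiply, Matrix.fromBlocks_mul_fromRows,
      Matrix.fromCols_mul_fromBlocks, Matrix.fromCols_mul_fromRows,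
      Matrix.fromRows_mul]
  have hNx : N.mulVec x = (μ - 1) • x := by
    rw [hN, Matrix.sub_mulVec, hμ, Matrix.one_mulVec, sub_smul, one_smul]
  have h3 : ((μ - 1) ^ 3) • x = 0 := by
    have : (N * N * N).mulVec x = ((μ - 1) ^ 3) • x := by
      rw [← Matrix.mulVec_mulVec, ← Matrix.mulVec_mulVec]
      simp only [hNx, Matrix.mulVec_smul, smul_smul]
      ring_nf
    rw [hN3] at this
    simpa using this.symm
  have : (μ - 1) ^ 3 = 0 := by
    by_contra h
    exact hx (by simpa [h] using (smul_eq_zero.mp h3).resolve_left h)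
  have := pow_eq_zero_iff (n := 3) (by norm_num) |>.mp this
  linarith [sub_eq_zero.mp this]
end

section
/- Let $A_1$, $S_1 = A_2 + B_1 A_1^{-1} B_1^T$, $S_2 = A_3 + B_2 S_1^{-1} B_2^T$ be invertible real matrices, $\mathcal{A}$ the double saddle-point matrix with blocks $(A_1, B_1^T, 0; B_1, -A_2, B_2^T; 0, B_2, A_3)$, and $\mathcal{P}_U = \begin{pmatrix} A_1 & B_1^T & 0 \\ 0 & -S_1 & B_2^T \\ 0 & 0 & S_2 \end{pmatrix}$. Then $\mathcal{A}\mathcal{P}_U^{-1} = \begin{pmatrix} \mathrm{I} & 0 & 0 \\ B_1 A_1^{-1} & \mathrm{I} & 0 \\ 0 & -B_2 S_1^{-1} & \mathrm{I} \end{pmatrix}$, and all eigenvalues of $\mathcal{P}_U^{-1}\mathcal{A}$ equal $1$. -/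
open Matrix

theorem stmt4 {n m p : ℕ}
    (A1 : Matrix (Fin n) (Fin n) ℝ) (A2 : Matrix (Fin m) (Fin m) ℝ)
    (A3 : Matrix (Fin p) (Fin p) ℝ)
    (B1 : Matrix (Fin m) (Fin n) ℝ) (B2 : Matrix (Fin p) (Fin m) ℝ)
    (S1 S2 : Matrix _ _ ℝ)
    (hS1 : S1 = A2 + B1 * A1⁻¹ * B1ᵀ)
    (hS2 : S2 = A3 + B2 * S1⁻¹ * B2ᵀ)
    (hA1 : IsUnit A1.det) (hS1u : IsUnit S1.det) (hS2u : IsUnit S2.det)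
    (𝒜 PU : Matrix ((Fin n ⊕ Fin m) ⊕ Fin p) ((Fin n ⊕ Fin m) ⊕ Fin p) ℝ)
    (h𝒜 : 𝒜 = Matrix.fromBlocks (Matrix.fromBlocks A1 B1ᵀ B1 (-A2))
      (Matrix.fromRows 0 B2ᵀ) (Matrix.fromCols 0 B2) A3)
    (hPU : PU = Matrix.fromBlocks (Matrix.fromBlocks A1 B1ᵀ 0 (-S1))
      (Matrix.fromRows 0 B2ᵀ) 0 S2) :
    𝒜 * PU⁻¹ = Matrix.fromBlocks (Matrix.fromBlocks 1 0 (B1 * A1⁻¹) 1)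
      0 (Matrix.fromCols 0 (-(B2 * S1⁻¹))) 1
    ∧ ∀ (μ : ℝ) (x : (Fin n ⊕ Fin m) ⊕ Fin p → ℝ), x ≠ 0 →
        (PU⁻¹ * 𝒜).mulVec x = μ • x → μ = 1 := by
  set L : Matrix ((Fin n ⊕ Fin m) ⊕ Fin p) ((Fin n ⊕ Fin m) ⊕ Fin p) ℝ :=
    Matrix.fromBlocks (Matrix.fromBlocks 1 0 (B1 * A1⁻¹) 1)
      0 (Matrix.fromCols 0 (-(B2 * S1⁻¹))) 1 with hL
  have hiA1 : A1⁻¹ * A1 = 1 := nonsing_inv_mul A1 hA1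
  have hiS1 : S1⁻¹ * S1 = 1 := nonsing_inv_mul S1 hS1u
  have key : 𝒜 = L * PU := by
    rw [h𝒜, hPU, hL, Matrix.fromBlocks_multiply, Matrix.fromBlocks_multiply,
      fromBlocks_mul_fromRows, fromCols_mul_fromBlocks, fromCols_mul_fromRows]
    simp only [Matrix.zero_mul, Matrix.mul_zero, add_zero, zero_add, neg_neg, neg_zero,
      Matrix.one_mul, Matrix.mul_one, Matrix.neg_mul, Matrix.mul_neg,
      Matrix.mul_assoc, hiA1, hiS1]
    refine Matrix.fromBlocks_inj.mpr ⟨Matrix.fromBlocks_inj.mpr ⟨?_, ?_, ?_, ?_⟩, ?_, ?_, ?_⟩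
    · rfl
    · rfl
    · rfl
    · rw [hS1, Matrix.mul_assoc]
      abel
    · rfl
    · simp
    · rw [hS2, Matrix.mul_assoc]
      abel
  have hPUdet : IsUnit PU.det := by
    rw [hPU, det_fromBlocks_zero₂₁, det_fromBlocks_zero₂₁]
    simpa [det_neg] using (((hA1.mul ((isUnit_one.neg.pow m).mul hS1u))).mul hS2u)
  constructor
  · rw [key, Matrix.mul_nonsing_inv_cancel_right _ _ hPUdet]
  · intro μ x hx hev
    have hAeq : 𝒜 = PU * (PU⁻¹ * 𝒜) := by
      rw [← Matrix.mul_assoc, Matrix.mul_nonsing_inv _ hPUdet, Matrix.one_mul]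
    have hy : L.mulVec (PU.mulVec x) = μ • (PU.mulVec x) := by
      rw [Matrix.mulVec_mulVec, ← key, hAeq, ← Matrix.mulVec_mulVec, hev,
        Matrix.mulVec_smul]
    have hy0 : PU.mulVec x ≠ 0 := by
      intro h0
      apply hx
      have := congrArg (PU⁻¹.mulVec) h0
      rwa [Matrix.mulVec_mulVec, Matrix.nonsing_inv_mul _ hPUdet, Matrix.one_mulVec,
        Matrix.mulVec_zero] at this
    by_contra hμ
    set y := PU.mulVec x
    have hLμ : (L - μ • 1).mulVec y = 0 := by
      rw [Matrix.sub_mulVec, hy, Matrix.smul_mulVec, Matrix.one_mulVec, sub_self]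
    have hdet : IsUnit (L - μ • 1).det := by
      have h1 : (L - μ • 1 : Matrix ((Fin n ⊕ Fin m) ⊕ Fin p) _ ℝ) =
          Matrix.fromBlocks (Matrix.fromBlocks ((1 - μ) • 1) 0 (B1 * A1⁻¹) ((1 - μ) • 1))
            0 (Matrix.fromCols 0 (-(B2 * S1⁻¹))) ((1 - μ) • 1) := by
        rw [hL, ← Matrix.fromBlocks_one (l := (Fin n ⊕ Fin m)) (m := Fin p),
          ← Matrix.fromBlocks_one (l := (Fin n)) (m := Fin m),
          Matrix.fromBlocks_smul, Matrix.fromBlocks_smul, sub_eq_add_neg,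
          Matrix.fromBlocks_neg, Matrix.fromBlocks_neg, Matrix.fromBlocks_add,
          Matrix.fromBlocks_add]
        refine Matrix.fromBlocks_inj.mpr
          ⟨Matrix.fromBlocks_inj.mpr ⟨?_, ?_, ?_, ?_⟩, ?_, ?_, ?_⟩ <;>
          simp [sub_eq_add_neg, add_smul, neg_smul]
      rw [h1, det_fromBlocks_zero₁₂, det_fromBlocks_zero₁₂]
      have hne : (1 - μ : ℝ) ≠ 0 := sub_ne_zero.mpr (fun h => hμ h.symm)
      simp [Matrix.det_smul, hne, isUnit_iff_ne_zero]
    apply hy0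
    have := congrArg ((L - μ • 1)⁻¹.mulVec) hLμ
    rwa [Matrix.mulVec_mulVec, Matrix.nonsing_inv_mul _ hdet, Matrix.one_mulVec,
      Matrix.mulVec_zero] at this
end
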